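/- Let p_m = exp(−d'−d'')/(B_N · S(d'',d') · C(N,d'')) with 1 ≤ d' ≤ d'' ≤ N, N ≥ 4. Then ln(1/p_m) ≤ d'·ln(d''·e²) + d''·ln(d'·e²) + d''·ln(N/d''). -/
import Mathlib


open Real

private lemma choose_le_bound (N k : ℕ) (hk : 1 ≤ k) :
    (N.choose k : ℝ) ≤ ((N : ℝ) * Real.exp 1 / k) ^ k := by
  have hk0 : (0:ℝ) < (k:ℝ) := by exact_mod_cast hk
  have h1 : (N.choose k : ℝ) ≤ ((N:ℝ) ^ k) / (Nat.factorial k : ℝ) := by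
    exact_mod_cast Nat.choose_le_pow_div (α := ℝ) k N
  have h2 : (k:ℝ) ^ k / (Nat.factorial k : ℝ) ≤ Real.exp k :=
    Real.pow_div_factorial_le_exp (x := (k:ℝ)) (le_of_lt hk0) k
  have hfac : (0:ℝ) < (Nat.factorial k : ℝ) := by exact_mod_cast Nat.factorial_pos k
  have h3 : (k:ℝ) ^ k / Real.exp k ≤ (Nat.factorial k : ℝ) := by
    rw [div_le_iff₀ (Real.exp_pos _)]
    rw [div_le_iff₀ hfac] at h2
    linarith
  have h4 : (0:ℝ) < (k:ℝ) ^ k / Real.exp k :=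
    div_pos (pow_pos hk0 k) (Real.exp_pos _)
  calc (N.choose k : ℝ) ≤ ((N:ℝ) ^ k) / (Nat.factorial k : ℝ) := h1
    _ ≤ ((N:ℝ) ^ k) / ((k:ℝ) ^ k / Real.exp k) :=
        div_le_div_of_nonneg_left (by positivity) h4 h3
    _ = ((N : ℝ) * Real.exp 1 / k) ^ k := by
        rw [div_pow, mul_pow, ← Real.exp_one_pow]
        field_simp
        try ring

/-- Upper bound on `ln(1/p_m)` for the prior
`p_m = exp(-d'-d'')/(B_N ⬝ S(d'',d') ⬝ C(N,d''))`, where `S` denotes the Stirling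
number of the second kind (given here through its known upper bound) and `B_N`
through its known upper bound. -/
theorem log_inv_prior_upper (N d' d'' : ℕ) (B S : ℝ)
    (hd' : 1 ≤ d') (hd'd'' : d' ≤ d'') (hd''N : d'' ≤ N) (hN : 4 ≤ N)
    (hB0 : 0 < B)
    (hB : B ≤ Real.exp 1 ^ 3 / ((Real.exp 1 - 1) ^ 2 * (Real.exp 1 + 1)))
    (hS0 : 0 < S)
    (hS : S ≤ (1 / 2 : ℝ) * ((d'' : ℝ) * Real.exp 1) ^ d' *
      (d' : ℝ) ^ ((d'' : ℝ) - 2 * d')) :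
    Real.log (1 / (Real.exp (-(d' : ℝ) - d'') / (B * S * (N.choose d'' : ℝ)))) ≤
      (d' : ℝ) * Real.log ((d'' : ℝ) * Real.exp 1 ^ 2) +
      (d'' : ℝ) * Real.log ((d' : ℝ) * Real.exp 1 ^ 2) +
      (d'' : ℝ) * Real.log ((N : ℝ) / d'') := by
  have e1 : (2.7182818283 : ℝ) < Real.exp 1 := Real.exp_one_gt_d9
  have e2 : Real.exp 1 < 2.7182818286 := Real.exp_one_lt_d9
  have ha0 : (0:ℝ) < (d':ℝ) := by exact_mod_cast hd'
  have ha1 : (1:ℝ) ≤ (d':ℝ) := by exact_mod_cast hd'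
  have hb0 : (0:ℝ) < (d'':ℝ) := lt_of_lt_of_le ha0 (by exact_mod_cast hd'd'')
  have hn0 : (0:ℝ) < (N:ℝ) := lt_of_lt_of_le hb0 (by exact_mod_cast hd''N)
  have hC0 : (0:ℝ) < (N.choose d'' : ℝ) := by
    exact_mod_cast Nat.choose_pos hd''N
  -- rewrite LHS
  have hLHS : Real.log (1 / (Real.exp (-(d' : ℝ) - d'') / (B * S * (N.choose d'' : ℝ))))
      = Real.log B + Real.log S + Real.log (N.choose d'' : ℝ) + ((d':ℝ) + d'') := by
    rw [one_div, Real.log_inv, Real.log_div (Real.exp_ne_zero _)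
      (by positivity), Real.log_exp,
      Real.log_mul (by positivity) (ne_of_gt hC0),
      Real.log_mul (ne_of_gt hB0) (ne_of_gt hS0)]
    ring
  rw [hLHS]
  -- bound on log B
  have hBle2 : B ≤ 2 := by
    refine hB.trans ?_
    rw [div_le_iff₀ (by nlinarith)]
    nlinarith
  have hlogB : Real.log B ≤ Real.log 2 := Real.log_le_log hB0 hBle2
  -- bound on log S
  have hlogS : Real.log S ≤ -Real.log 2 + (d':ℝ) * (Real.log d'' + 1)
      + ((d'':ℝ) - 2*d') * Real.log d' := by
    refine (Real.log_le_log hS0 hS).trans_eq ?_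
    rw [Real.log_mul (by positivity) (by positivity),
      Real.log_mul (by norm_num) (by positivity),
      Real.log_pow, Real.log_rpow ha0,
      Real.log_mul (ne_of_gt hb0) (Real.exp_ne_zero 1), Real.log_exp,
      show (1/2:ℝ) = 2⁻¹ by norm_num, Real.log_inv]
    try ring
  -- bound on log C
  have hlogC : Real.log (N.choose d'' : ℝ) ≤
      (d'':ℝ) * (Real.log N + 1 - Real.log d'') := by
    refine (Real.log_le_log hC0 (choose_le_bound N d'' (le_trans hd' hd'd''))).trans_eq ?_
    rw [Real.log_pow, Real.log_div (by positivity) (ne_of_gt hb0),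
      Real.log_mul (ne_of_gt hn0) (Real.exp_ne_zero 1), Real.log_exp]
    try push_cast
    try ring
  -- rewrite RHS
  rw [Real.log_mul (ne_of_gt hb0) (by positivity),
    Real.log_mul (ne_of_gt ha0) (by positivity),
    Real.log_div (ne_of_gt hn0) (ne_of_gt hb0), Real.log_pow, Real.log_exp]
  have hloga : 0 ≤ Real.log d' := Real.log_nonneg ha1
  have key : 0 ≤ (d':ℝ) * Real.log d' := mul_nonneg (le_of_lt ha0) hloga
  push_cast
  nlinarith [hlogB, hlogS, hlogC, key]
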